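/- arXiv:0808.3119 — 2 statements merged into one kernel-verified Lean document; each statement's English description precedes it below -/
import Mathlib

section
/- Let k be a field, G a finite group, H a subgroup of G, and let X be a cochain complex of H-projective kG-modules whose restriction to kH is split exact. Then for every integer n, the inclusion Z^n(X) → X^n is an H-Proj-preenvelope: for every H-projective kG-module P and every kG-homomorphism f : Z^n(X) → P, there exists a kG-homomorphism g : X^n → P whose restriction to Z^n(X) equals f. -/
open CategoryTheory

/-- The inclusion of group algebras `kH →+* kG` induced by the inclusion `H ≤ G`. -/
noncomputable def hres (k : Type) [Field k] (G : Type) [Group G] (H : Subgroup G) :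
    MonoidAlgebra k ↥H →+* MonoidAlgebra k G :=
  MonoidAlgebra.mapDomainRingHom k H.subtype

/-- Restriction of scalars from `kG`-modules to `kH`-modules, applied termwise to
cochain complexes. -/
noncomputable def ResC (k : Type) [Field k] (G : Type) [Group G] (H : Subgroup G) :
    CochainComplex (ModuleCat (MonoidAlgebra k G)) ℤ ⥤
      CochainComplex (ModuleCat (MonoidAlgebra k ↥H)) ℤ :=
  (ModuleCat.restrictScalars (hres k G H)).mapHomologicalComplex (ComplexShape.up ℤ)

/-- The induced module `kG ⊗_{kH} N` of a `kH`-module `N`, constructed as the quotient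
of the free `kG`-module on the underlying set of `N` by the usual bilinearity and
`kH`-balancedness relations. -/
noncomputable def IndObj (k : Type) [Field k] (G : Type) [Group G] (H : Subgroup G)
    (N : ModuleCat (MonoidAlgebra k ↥H)) : ModuleCat (MonoidAlgebra k G) :=
  ModuleCat.of (MonoidAlgebra k G)
    ((↥N →₀ MonoidAlgebra k G) ⧸ (Submodule.span (MonoidAlgebra k G)
      ({x | ∃ n n' : ↥N, x = Finsupp.single (n + n') (1 : MonoidAlgebra k G)
              - Finsupp.single n 1 - Finsupp.single n' 1} ∪
       {x | ∃ (r : MonoidAlgebra k ↥H) (n : ↥N),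
              x = Finsupp.single (r • n) (1 : MonoidAlgebra k G)
                - Finsupp.single n (hres k G H r)})))

/-- A `kG`-module is `H`-projective if it is a direct summand of a module induced
from a `kH`-module. -/
def IsHProj (k : Type) [Field k] (G : Type) [Group G] (H : Subgroup G)
    (M : ModuleCat (MonoidAlgebra k G)) : Prop :=
  ∃ (N : ModuleCat (MonoidAlgebra k ↥H)) (i : M ⟶ IndObj k G H N)
    (r : IndObj k G H N ⟶ M), i ≫ r = 𝟙 M

/-- The cycles `Z^n(X) = ker (d^n)` of a cochain complex of modules. -/
def Zn {R : Type} [Ring R] (X : CochainComplex (ModuleCat R) ℤ) (n : ℤ) :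
    Submodule R (X.X n) :=
  LinearMap.ker (X.d n (n + 1)).hom

/-!
STATEMENT 1: if X is a cochain complex of H-projective kG-modules whose restriction to
kH is split exact, then for every n the inclusion Z^n(X) → X^n is an H-Proj-preenvelope.
-/
section Aux

variable {k : Type} [Field k] {G : Type} [Group G] {H : Subgroup G}

theorem hres_single (s : ↥H) (a : k) :
    hres k G H (MonoidAlgebra.single s a) = MonoidAlgebra.single (s : G) a := by
  simp [hres, MonoidAlgebra.mapDomainRingHom]

variable {M P Q : Type*} [AddCommGroup M] [AddCommGroup P] [AddCommGroup Q]
  [Module (MonoidAlgebra k G) M] [Module (MonoidAlgebra k G) P]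
  [Module (MonoidAlgebra k G) Q]

/-- `φ` is additive and `kH`-linear. -/
def IsHLin (k : Type) [Field k] {G : Type} [Group G] (H : Subgroup G)
    {M P : Type*} [AddCommGroup M] [AddCommGroup P]
    [Module (MonoidAlgebra k G) M] [Module (MonoidAlgebra k G) P] (φ : M → P) : Prop :=
  (∀ x y, φ (x + y) = φ x + φ y) ∧
  (∀ (s : MonoidAlgebra k ↥H) (x : M), φ (hres k G H s • x) = hres k G H s • φ x)

theorem IsHLin.zero {φ : M → P} (hφ : IsHLin k H φ) : φ 0 = 0 := by
  have h := hφ.1 0 0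
  rw [add_zero] at h
  exact left_eq_add.mp h

theorem IsHLin.smul_mem {φ : M → P} (hφ : IsHLin k H φ) {h : G} (hh : h ∈ H) (a : k) (x : M) :
    φ (MonoidAlgebra.single h a • x) = MonoidAlgebra.single h a • φ x := by
  have := hφ.2 (MonoidAlgebra.single (⟨h, hh⟩ : H) a) x
  rwa [hres_single] at this

theorem IsHLin.comp_llin {φ : M → P} (hφ : IsHLin k H φ)
    (ρ : P →ₗ[MonoidAlgebra k G] Q) : IsHLin k H (fun x => ρ (φ x)) :=
  ⟨fun x y => by simp only []; rw [hφ.1, map_add], fun s x => by simp only []; rw [hφ.2, map_smul]⟩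

theorem IsHLin.llin_comp {φ : P → Q} (hφ : IsHLin k H φ)
    (ι : M →ₗ[MonoidAlgebra k G] P) : IsHLin k H (fun x => φ (ι x)) :=
  ⟨fun x y => by simp only []; rw [map_add, hφ.1], fun s x => by simp only []; rw [map_smul, hφ.2]⟩

theorem IsHLin.comp {φ : M → P} {ψ : P → Q} (hφ : IsHLin k H φ) (hψ : IsHLin k H ψ) :
    IsHLin k H (fun x => ψ (φ x)) :=
  ⟨fun x y => by simp only []; rw [hφ.1, hψ.1], fun s x => by simp only []; rw [hφ.2, hψ.2]⟩

theorem sm1 (a b : G) (v : M) :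
    MonoidAlgebra.single a (1:k) • MonoidAlgebra.single b (1:k) • v
      = MonoidAlgebra.single (a * b) (1:k) • v := by
  rw [← mul_smul, MonoidAlgebra.single_mul_single, one_mul]

variable (k H) in
/-- Relative trace of a `kH`-linear map, giving a `kG`-linear map. -/
noncomputable def tr [Fintype (G ⧸ H)] (φ : M → P) : M → P := fun x =>
  ∑ q : G ⧸ H, MonoidAlgebra.single (Quotient.out q) (1:k) •
    φ (MonoidAlgebra.single (Quotient.out q)⁻¹ (1:k) • x)

variable [Fintype (G ⧸ H)]

theorem tr_add {φ : M → P} (hφ : IsHLin k H φ) (x y : M) :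
    tr k H φ (x + y) = tr k H φ x + tr k H φ y := by
  unfold tr
  rw [← Finset.sum_add_distrib]
  refine Finset.sum_congr rfl fun q _ => ?_
  rw [smul_add, hφ.1, smul_add]

theorem tr_single_one_smul {φ : M → P} (hφ : IsHLin k H φ) (g : G) (x : M) :
    tr k H φ (MonoidAlgebra.single g (1:k) • x) =
      MonoidAlgebra.single g (1:k) • tr k H φ x := by
  unfold tr
  rw [Finset.smul_sum]
  rw [← Equiv.sum_comp (MulAction.toPerm g : Equiv.Perm (G ⧸ H))]
  refine Finset.sum_congr rfl fun q _ => ?_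
  -- (g • q).out = g * q.out * h for some h ∈ H
  obtain ⟨h, hh⟩ := QuotientGroup.mk_out_eq_mul H (g * Quotient.out q)
  have hq : (MulAction.toPerm g q : G ⧸ H) = QuotientGroup.mk (g * Quotient.out q) := by
    show g • q = _
    conv_lhs => rw [← QuotientGroup.out_eq' q]
    rfl
  rw [hq, hh]
  have h1 : MonoidAlgebra.single (g * Quotient.out q * (h:G))⁻¹ (1:k) •
      (MonoidAlgebra.single g (1:k) • x) =
      MonoidAlgebra.single ((h:G))⁻¹ (1:k) •
        (MonoidAlgebra.single (Quotient.out q)⁻¹ (1:k) • x) := by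
    rw [sm1, sm1]
    congr 1
    group
  rw [h1, hφ.smul_mem (inv_mem h.2), sm1, sm1]
  congr 1
  group

theorem sm2 (b : G) (c : k) (v : M) :
    MonoidAlgebra.single b (1:k) • MonoidAlgebra.single (1:G) c • v
      = MonoidAlgebra.single (1:G) c • MonoidAlgebra.single b (1:k) • v := by
  rw [← mul_smul, ← mul_smul, MonoidAlgebra.single_mul_single,
    MonoidAlgebra.single_mul_single, one_mul, mul_one, one_mul, mul_one]

theorem tr_zero {φ : M → P} (hφ : IsHLin k H φ) : tr k H φ 0 = 0 := by
  unfold tr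
  refine Finset.sum_eq_zero fun q _ => ?_
  rw [smul_zero, hφ.zero, smul_zero]

theorem tr_scalar_smul {φ : M → P} (hφ : IsHLin k H φ) (c : k) (x : M) :
    tr k H φ (MonoidAlgebra.single (1:G) c • x)
      = MonoidAlgebra.single (1:G) c • tr k H φ x := by
  unfold tr
  rw [Finset.smul_sum]
  refine Finset.sum_congr rfl fun q _ => ?_
  rw [sm2, hφ.smul_mem H.one_mem, sm2]

theorem tr_smul {φ : M → P} (hφ : IsHLin k H φ) (r : MonoidAlgebra k G) (x : M) :
    tr k H φ (r • x) = r • tr k H φ x := by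
  induction r using MonoidAlgebra.induction generalizing x with
  | zero => rw [zero_smul, tr_zero hφ, zero_smul]
  | single_add g c f _ _ ih =>
      rw [add_smul, add_smul, tr_add hφ, ih]
      congr 1
      have hgc : (MonoidAlgebra.single g c : MonoidAlgebra k G)
          = MonoidAlgebra.single g (1:k) * MonoidAlgebra.single (1:G) c := by
        rw [MonoidAlgebra.single_mul_single, mul_one, one_mul]
      rw [hgc, mul_smul, mul_smul, tr_single_one_smul hφ, tr_scalar_smul hφ]

theorem tr_comp_llin {φ : P → Q} (ι : M →ₗ[MonoidAlgebra k G] P) (x : M) :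
    tr k H (fun y => φ (ι y)) x = tr k H φ (ι x) := by
  unfold tr
  refine Finset.sum_congr rfl fun q _ => ?_
  simp only []
  rw [map_smul]

theorem llin_comp_tr {φ : M → P} (ρ : P →ₗ[MonoidAlgebra k G] Q) (x : M) :
    tr k H (fun y => ρ (φ y)) x = ρ (tr k H φ x) := by
  unfold tr
  rw [map_sum]
  refine Finset.sum_congr rfl fun q _ => ?_
  simp only []
  rw [map_smul]

end Aux

section Higman

variable {k : Type} [Field k] {G : Type} [Group G] (H : Subgroup G)

attribute [local instance] Classical.propDecidable

/-- Projection of `kG` onto its `kH`-component. -/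
noncomputable def filt (c : MonoidAlgebra k G) : MonoidAlgebra k G :=
  MonoidAlgebra.ofCoeff (Finsupp.filter (· ∈ H) c.coeff)

theorem filt_apply (c : MonoidAlgebra k G) (g : G) :
    (filt H c).coeff g = if g ∈ H then c.coeff g else 0 := rfl

theorem filt_add (c d : MonoidAlgebra k G) : filt H (c + d) = filt H c + filt H d := by
  ext g
  have lhs : (filt H (c + d)).coeff g = if g ∈ H then c.coeff g + d.coeff g else 0 := rfl
  have rhs : (filt H c + filt H d).coeff g =
      (if g ∈ H then c.coeff g else 0) + (if g ∈ H then d.coeff g else 0) := rfl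
  rw [lhs, rhs]
  split <;> simp

theorem filt_zero : filt H (0 : MonoidAlgebra k G) = 0 :=
  congrArg MonoidAlgebra.ofCoeff (Finsupp.filter_zero _)

theorem filt_single (g : G) (a : k) :
    filt H (MonoidAlgebra.single g a) =
      if g ∈ H then MonoidAlgebra.single g a else 0 := by
  unfold filt
  split
  · exact congrArg MonoidAlgebra.ofCoeff (Finsupp.filter_single_of_pos _ ‹_›)
  · exact congrArg MonoidAlgebra.ofCoeff (Finsupp.filter_single_of_neg _ ‹_›)

theorem filt_single_mul {h : G} (hh : h ∈ H) (a : k) (c : MonoidAlgebra k G) :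
    filt H (MonoidAlgebra.single h a * c) = MonoidAlgebra.single h a * filt H c := by
  ext g
  rw [filt_apply, MonoidAlgebra.coeff_single_mul_apply, MonoidAlgebra.coeff_single_mul_apply, filt_apply]
  by_cases hg : g ∈ H
  · rw [if_pos hg, if_pos (H.mul_mem (inv_mem hh) hg)]
  · rw [if_neg hg, if_neg (fun hc => hg (by simpa using H.mul_mem hh hc)), mul_zero]

theorem filt_mul_single {h : G} (hh : h ∈ H) (a : k) (c : MonoidAlgebra k G) :
    filt H (c * MonoidAlgebra.single h a) = filt H c * MonoidAlgebra.single h a := by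
  ext g
  rw [filt_apply, MonoidAlgebra.coeff_mul_single_apply, MonoidAlgebra.coeff_mul_single_apply, filt_apply]
  by_cases hg : g ∈ H
  · rw [if_pos hg, if_pos (H.mul_mem hg (inv_mem hh))]
  · rw [if_neg hg, if_neg (fun hc => hg (by simpa using H.mul_mem hc hh)), zero_mul]

theorem filt_hres_mul (s : MonoidAlgebra k ↥H) (c : MonoidAlgebra k G) :
    filt H (hres k G H s * c) = hres k G H s * filt H c := by
  induction s using MonoidAlgebra.induction with
  | zero => rw [map_zero, zero_mul, zero_mul, filt_zero]
  | single_add u b f _ _ ih =>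
      rw [map_add, add_mul, add_mul, filt_add, ih, hres_single,
        filt_single_mul H u.2]

theorem filt_mul_hres (s : MonoidAlgebra k ↥H) (c : MonoidAlgebra k G) :
    filt H (c * hres k G H s) = filt H c * hres k G H s := by
  induction s using MonoidAlgebra.induction with
  | zero => rw [map_zero, mul_zero, mul_zero, filt_zero]
  | single_add u b f _ _ ih =>
      rw [map_add, mul_add, mul_add, filt_add, ih, hres_single,
        filt_mul_single H u.2]

theorem filt_sub (c d : MonoidAlgebra k G) : filt H (c - d) = filt H c - filt H d := by
  ext g
  have lhs : (filt H (c - d)).coeff g = if g ∈ H then c.coeff g - d.coeff g else 0 := rfl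
  have rhs : (filt H c - filt H d).coeff g =
      (if g ∈ H then c.coeff g else 0) - (if g ∈ H then d.coeff g else 0) := rfl
  rw [lhs, rhs]
  split <;> simp

theorem filt_one : filt H (1 : MonoidAlgebra k G) = 1 := by
  rw [MonoidAlgebra.one_def, filt_single, if_pos H.one_mem]

end Higman

section Ind

variable {k : Type} [Field k] {G : Type} [Group G] {H : Subgroup G}
variable (N : ModuleCat (MonoidAlgebra k ↥H))

/-- The submodule of relations defining `IndObj`. -/
noncomputable def indW : Submodule (MonoidAlgebra k G) (↥N →₀ MonoidAlgebra k G) :=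
  Submodule.span (MonoidAlgebra k G)
    ({x | ∃ n n' : ↥N, x = Finsupp.single (n + n') (1 : MonoidAlgebra k G)
            - Finsupp.single n 1 - Finsupp.single n' 1} ∪
     {x | ∃ (r : MonoidAlgebra k ↥H) (n : ↥N),
            x = Finsupp.single (r • n) (1 : MonoidAlgebra k G)
              - Finsupp.single n (hres k G H r)})

/-- The quotient map onto `IndObj`. -/
noncomputable def indMk (v : ↥N →₀ MonoidAlgebra k G) : ↥(IndObj k G H N) :=
  (Submodule.Quotient.mk (p := indW N) v : (↥N →₀ MonoidAlgebra k G) ⧸ indW N)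

theorem indMk_surjective : Function.Surjective (indMk (k := k) (G := G) (H := H) N) :=
  Submodule.Quotient.mk_surjective (indW N)

theorem indMk_add (v w : ↥N →₀ MonoidAlgebra k G) :
    indMk N (v + w) = indMk N v + indMk N w :=
  Submodule.Quotient.mk_add _

theorem indMk_smul (r : MonoidAlgebra k G) (v : ↥N →₀ MonoidAlgebra k G) :
    indMk N (r • v) = r • indMk N v :=
  Submodule.Quotient.mk_smul _ _ _

/-- The `kH`-component map on the free module, descended to `IndObj`. -/
noncomputable def indT (v : ↥N →₀ MonoidAlgebra k G) : ↥(IndObj k G H N) :=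
  indMk N (v.mapRange (filt H) (filt_zero H))

theorem indT_add (v w : ↥N →₀ MonoidAlgebra k G) :
    indT N (v + w) = indT N v + indT N w := by
  unfold indT
  rw [Finsupp.mapRange_add (filt_add H), indMk_add]

theorem indT_sub (v w : ↥N →₀ MonoidAlgebra k G) :
    indT N (v - w) = indT N v - indT N w := by
  unfold indT
  rw [Finsupp.mapRange_sub (filt_sub H), indMk, indMk, indMk, Submodule.Quotient.mk_sub]; rfl

theorem indT_ker : ∀ x ∈ indW (k := k) (G := G) (H := H) N, indT N x = 0 := by
  intro x hx
  have main : ∀ (c : MonoidAlgebra k G), indT N (c • x) = 0 := by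
    induction hx using Submodule.span_induction with
    | mem y hy =>
        intro c
        rcases hy with ⟨n, n', rfl⟩ | ⟨r, n, rfl⟩
        · have hc : c • (Finsupp.single (n + n') (1 : MonoidAlgebra k G)
              - Finsupp.single n 1 - Finsupp.single n' 1)
            = Finsupp.single (n + n') c - Finsupp.single n c - Finsupp.single n' c := by
            rw [smul_sub, smul_sub, Finsupp.smul_single, Finsupp.smul_single,
              Finsupp.smul_single, smul_eq_mul, mul_one]
          rw [hc]
          rw [indT_sub, indT_sub]
          unfold indT
          rw [Finsupp.mapRange_single, Finsupp.mapRange_single, Finsupp.mapRange_single]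
          have : indMk N (Finsupp.single (n + n') (filt H c))
              - indMk N (Finsupp.single n (filt H c))
              - indMk N (Finsupp.single n' (filt H c))
              = indMk N (filt H c • (Finsupp.single (n + n') (1 : MonoidAlgebra k G)
                  - Finsupp.single n 1 - Finsupp.single n' 1)) := by
            rw [smul_sub, smul_sub, Finsupp.smul_single, Finsupp.smul_single,
              Finsupp.smul_single, smul_eq_mul, mul_one, indMk, indMk, indMk, indMk,
              Submodule.Quotient.mk_sub, Submodule.Quotient.mk_sub]; rfl
          rw [this, indMk]
          exact (Submodule.Quotient.mk_eq_zero _).mpr (Submodule.smul_mem _ _ (Submodule.subset_span (Or.inl ⟨n, n', rfl⟩)))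
        · have hc : c • (Finsupp.single (r • n) (1 : MonoidAlgebra k G)
              - Finsupp.single n (hres k G H r))
            = Finsupp.single (r • n) c - Finsupp.single n (c * hres k G H r) := by
            rw [smul_sub, Finsupp.smul_single, Finsupp.smul_single, smul_eq_mul, mul_one,
              smul_eq_mul]
          rw [hc, indT_sub]
          unfold indT
          rw [Finsupp.mapRange_single, Finsupp.mapRange_single, filt_mul_hres]
          have : indMk N (Finsupp.single (r • n) (filt H c))
              - indMk N (Finsupp.single n (filt H c * hres k G H r))
              = indMk N (filt H c • (Finsupp.single (r • n) (1 : MonoidAlgebra k G)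
                  - Finsupp.single n (hres k G H r))) := by
            rw [smul_sub, Finsupp.smul_single, Finsupp.smul_single, smul_eq_mul, mul_one,
              smul_eq_mul, indMk, indMk, indMk, Submodule.Quotient.mk_sub]; rfl
          rw [this, indMk]
          exact (Submodule.Quotient.mk_eq_zero _).mpr (Submodule.smul_mem _ _ (Submodule.subset_span (Or.inr ⟨r, n, rfl⟩)))
    | zero => intro c; rw [smul_zero]; unfold indT; rw [Finsupp.mapRange_zero]; exact
        Submodule.Quotient.mk_eq_zero _ |>.mpr (Submodule.zero_mem _)
    | add y z _ _ hy hz => intro c; rw [smul_add, indT_add, hy, hz, add_zero]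
    | smul a y _ hy => intro c; rw [smul_smul]; exact hy (c * a)
  have := main 1
  rwa [one_smul] at this

/-- The relative (Higman) idempotent endomorphism of `IndObj`. -/
noncomputable def indU : ↥(IndObj k G H N) → ↥(IndObj k G H N) := fun x =>
  Quotient.liftOn x (indT N) (fun a b hab => by
    have hmem : a - b ∈ indW N := (Submodule.quotientRel_def _).mp hab
    have h0 := indT_ker N _ hmem
    rw [indT_sub] at h0
    exact sub_eq_zero.mp h0)

theorem indU_mk (v : ↥N →₀ MonoidAlgebra k G) : indU N (indMk N v) = indT N v := rfl

theorem indU_hlin : IsHLin k H (indU N) := by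
  constructor
  · intro x y
    obtain ⟨v, rfl⟩ := indMk_surjective N x
    obtain ⟨w, rfl⟩ := indMk_surjective N y
    rw [← indMk_add, indU_mk, indU_mk, indU_mk, indT_add]
  · intro s x
    obtain ⟨v, rfl⟩ := indMk_surjective N x
    rw [← indMk_smul, indU_mk, indU_mk]
    unfold indT
    have : (hres k G H s • v).mapRange (filt H) (filt_zero H)
        = hres k G H s • v.mapRange (filt H) (filt_zero H) := by
      ext n
      rw [Finsupp.mapRange_apply, Finsupp.smul_apply, Finsupp.smul_apply,
        Finsupp.mapRange_apply, smul_eq_mul, smul_eq_mul, filt_hres_mul]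
    rw [this, indMk_smul]

theorem tr_indU [Fintype (G ⧸ H)] (x : ↥(IndObj k G H N)) :
    tr k H (indU N) x = x := by
  obtain ⟨v, rfl⟩ := indMk_surjective N x
  induction v using Finsupp.induction with
  | zero =>
      have h0 : indMk N (0 : ↥N →₀ MonoidAlgebra k G) = 0 := Submodule.Quotient.mk_zero _
      rw [h0, tr_zero (indU_hlin N)]
  | single_add n c f _ _ ih =>
      rw [indMk_add, tr_add (indU_hlin N), ih]
      congr 1
      have hc : (Finsupp.single n c : ↥N →₀ MonoidAlgebra k G)
          = c • Finsupp.single n (1 : MonoidAlgebra k G) := by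
        rw [Finsupp.smul_single, smul_eq_mul, mul_one]
      rw [hc, indMk_smul, tr_smul (indU_hlin N)]
      congr 1
      -- the base case
      have base : ∀ (a : G), MonoidAlgebra.single a (1:k) •
          indMk N (Finsupp.single n (1 : MonoidAlgebra k G))
          = indMk N (Finsupp.single n (MonoidAlgebra.single a (1:k))) := by
        intro a
        rw [← indMk_smul, Finsupp.smul_single, smul_eq_mul, mul_one]
      unfold tr
      rw [Finset.sum_eq_single_of_mem (QuotientGroup.mk (1 : G) : G ⧸ H)
        (Finset.mem_univ _) ?vanish]
      case vanish =>
        intro q _ hq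
        have hout : (Quotient.out q)⁻¹ ∉ H := by
          intro hmem
          apply hq
          rw [← QuotientGroup.out_eq' q]
          exact QuotientGroup.eq.mpr (by simpa using hmem)
        rw [base, indU_mk]
        unfold indT
        rw [Finsupp.mapRange_single, filt_single, if_neg hout, Finsupp.single_zero]
        have : indMk N (0 : ↥N →₀ MonoidAlgebra k G) = 0 := Submodule.Quotient.mk_zero _
        rw [this, smul_zero]
      · have hout : (Quotient.out (QuotientGroup.mk (1:G) : G ⧸ H)) ∈ H := by
          have := QuotientGroup.out_eq' (QuotientGroup.mk (1:G) : G ⧸ H)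
          have h2 := QuotientGroup.eq.mp this
          simpa using h2
        rw [base, indU_mk]
        unfold indT
        rw [Finsupp.mapRange_single, filt_single, if_pos (inv_mem hout), ← indMk_smul,
          Finsupp.smul_single, smul_eq_mul, MonoidAlgebra.single_mul_single, one_mul,
          mul_inv_cancel, ← MonoidAlgebra.one_def]

end Ind

/-- Higman's criterion: an `H`-projective module admits a `kH`-linear endomorphism
with relative trace the identity. -/
theorem higman {k : Type} [Field k] {G : Type} [Group G] {H : Subgroup G}
    [Fintype (G ⧸ H)] (P : ModuleCat (MonoidAlgebra k G)) (hP : IsHProj k G H P) :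
    ∃ u : ↥P → ↥P, IsHLin k H u ∧ ∀ x, tr k H u x = x := by
  obtain ⟨N, i, r, hir⟩ := hP
  refine ⟨fun x => r (indU N (i x)), ((indU_hlin N).llin_comp i.hom).comp_llin r.hom, fun x => ?_⟩
  have h1 : tr k H (fun x => r (indU N (i x))) x
      = r (tr k H (fun y => indU N (i y)) x) :=
    llin_comp_tr (φ := fun y => indU N (i y)) r.hom x
  rw [h1, tr_comp_llin (φ := indU N) i.hom, tr_indU]
  exact congrArg (fun (φ : P ⟶ P) => φ x) hir

section Retract

variable {k : Type} [Field k] {G : Type} [Group G] {H : Subgroup G}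

theorem zn_retract (X : CochainComplex (ModuleCat (MonoidAlgebra k G)) ℤ)
    (hX : Nonempty (Homotopy (𝟙 ((ResC k G H).obj X)) 0)) (n : ℤ) :
    ∃ π : ↥(X.X n) → ↥(X.X n), IsHLin k H π ∧ (∀ x, π x ∈ Zn X n) ∧
      ∀ z ∈ Zn X n, π z = z := by
  classical
  obtain ⟨ht⟩ := hX
  -- the contracting homotopy in degree `n`
  let s : ↥(X.X n) → ↥(X.X (n - 1)) := fun x => ht.hom n (n - 1) x
  have hs_add : ∀ x y, s (x + y) = s x + s y := fun x y => (ht.hom n (n - 1)).hom.map_add x y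
  have hs_smul : ∀ (t : MonoidAlgebra k ↥H) (x : ↥(X.X n)),
      s (hres k G H t • x) = hres k G H t • s x := fun t x =>
    (ht.hom n (n - 1)).hom.map_smul t x
  refine ⟨fun x => X.d (n - 1) n (s x), ⟨?_, ?_⟩, ?_, ?_⟩
  · intro x y
    simp only []
    rw [hs_add, map_add]
  · intro t x
    simp only []
    rw [hs_smul, map_smul]
  · intro x
    simp only [Zn, LinearMap.mem_ker]
    have h0 : X.d (n - 1) n ≫ X.d n (n + 1) = 0 := X.d_comp_d _ _ _
    have h1 := LinearMap.congr_fun (congrArg ModuleCat.Hom.hom h0) (s x)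
    simpa only [ModuleCat.hom_comp, ModuleCat.hom_zero, LinearMap.comp_apply, LinearMap.zero_apply] using h1
  · intro z hz
    have comm := ht.comm n
    rw [dNext_eq ht.hom (show (ComplexShape.up ℤ).Rel n (n + 1) from rfl),
      prevD_eq ht.hom (show (ComplexShape.up ℤ).Rel (n - 1) n by simp)] at comm
    have hcomm : z = ht.hom (n + 1) n (((ResC k G H).obj X).d n (n + 1) z)
        + ((ResC k G H).obj X).d (n - 1) n (ht.hom n (n - 1) z)
        + (0 : ↥(((ResC k G H).obj X).X n)) :=
      LinearMap.congr_fun (congrArg ModuleCat.Hom.hom comm) z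
    rw [add_zero] at hcomm
    -- the first summand vanishes since `z` is a cycle
    have hd : (((ResC k G H).obj X).d n (n + 1)) z = (0 : ↥(((ResC k G H).obj X).X (n + 1))) := by
      show X.d n (n + 1) z = 0
      exact hz
    rw [hd, map_zero, zero_add] at hcomm
    exact hcomm.symm

end Retract

theorem stmt_1 (k : Type) [Field k] (G : Type) [Group G] [Finite G] (H : Subgroup G)
    (X : CochainComplex (ModuleCat (MonoidAlgebra k G)) ℤ)
    (hHP : ∀ n : ℤ, IsHProj k G H (X.X n))
    (hX : Nonempty (Homotopy (𝟙 ((ResC k G H).obj X)) 0)) :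
    ∀ (n : ℤ) (P : ModuleCat (MonoidAlgebra k G)), IsHProj k G H P →
      ∀ f : ↥(Zn X n) →ₗ[MonoidAlgebra k G] ↥P,
        ∃ g : ↥(X.X n) →ₗ[MonoidAlgebra k G] ↥P,
          g ∘ₗ (Zn X n).subtype = f := by
  intro n P hP f
  haveI : Fintype (G ⧸ H) := Fintype.ofFinite (G ⧸ H)
  obtain ⟨π, hπ, hmem, hfix⟩ := zn_retract X hX n
  obtain ⟨u, hu, htr⟩ := higman (k := k) (G := G) (H := H) P hP
  -- `kH`-linear lift of `f` along the retraction `π`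
  set f' : ↥(X.X n) → ↥P := fun x => f ⟨π x, hmem x⟩ with hf'def
  have hf' : IsHLin k H f' := by
    constructor
    · intro x y
      have : (⟨π (x + y), hmem _⟩ : ↥(Zn X n)) = ⟨π x, hmem x⟩ + ⟨π y, hmem y⟩ :=
        Subtype.ext (by exact hπ.1 x y)
      rw [hf'def]
      simp only []
      rw [this, map_add]
    · intro t x
      have : (⟨π (hres k G H t • x), hmem _⟩ : ↥(Zn X n))
          = hres k G H t • ⟨π x, hmem x⟩ :=
        Subtype.ext (by exact hπ.2 t x)
      rw [hf'def]
      simp only []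
      rw [this, map_smul]
  have hφ : IsHLin k H (fun x => u (f' x)) := hf'.comp hu
  refine ⟨⟨⟨tr k H (fun x => u (f' x)), tr_add hφ⟩, tr_smul hφ⟩, ?_⟩
  apply LinearMap.ext
  intro z
  show tr k H (fun x => u (f' x)) (z : ↥(X.X n)) = f z
  have key : tr k H (fun x => u (f' x)) (z : ↥(X.X n)) = tr k H u (f z) := by
    unfold tr
    refine Finset.sum_congr rfl fun q _ => ?_
    simp only []
    congr 1
    congr 1
    rw [hf'def]
    simp only []
    have hz' : MonoidAlgebra.single (Quotient.out q)⁻¹ (1:k) • (z : ↥(X.X n)) ∈ Zn X n :=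
      Submodule.smul_mem _ _ z.2
    have h1 : (⟨π (MonoidAlgebra.single (Quotient.out q)⁻¹ (1:k) • (z : ↥(X.X n))),
        hmem _⟩ : ↥(Zn X n)) = MonoidAlgebra.single (Quotient.out q)⁻¹ (1:k) • z :=
      Subtype.ext (by exact hfix _ hz')
    rw [h1, map_smul]
  rw [key, htr]
end

section
/- Let k be a field, G a finite group, H a subgroup of G, and let X be a cochain complex of H-projective kG-modules whose restriction to kH is split exact. Then for every integer n, the surjection X^n → Z^{n+1}(X) induced by the differential is an H-Proj-precover: for every H-projective kG-module P and every kG-homomorphism f : P → Z^{n+1}(X), there exists a kG-homomorphism g : P → X^n such that f equals the composite of g with the corestricted differential X^n → Z^{n+1}(X). -/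
open CategoryTheory

/-!
STATEMENT 2: if X is a cochain complex of H-projective kG-modules whose restriction to
kH is split exact, then for every n the surjection X^n → Z^{n+1}(X) induced by the
differential is an H-Proj-precover: every kG-homomorphism f : P → Z^{n+1}(X) from an
H-projective module P factors as the corestricted differential composed with some
g : P → X^n; equivalently, subtype ∘ f = d ∘ g.
-/
theorem stmt_2 (k : Type) [Field k] (G : Type) [Group G] [Finite G] (H : Subgroup G)
    (X : CochainComplex (ModuleCat (MonoidAlgebra k G)) ℤ)
    (hHP : ∀ n : ℤ, IsHProj k G H (X.X n))
    (hX : Nonempty (Homotopy (𝟙 ((ResC k G H).obj X)) 0)) :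
    ∀ (n : ℤ) (P : ModuleCat (MonoidAlgebra k G)), IsHProj k G H P →
      ∀ f : ↥P →ₗ[MonoidAlgebra k G] ↥(Zn X (n + 1)),
        ∃ g : ↥P →ₗ[MonoidAlgebra k G] ↥(X.X n),
          (Zn X (n + 1)).subtype ∘ₗ f =
            ((X.d n (n + 1)).hom : X.X n →ₗ[MonoidAlgebra k G] X.X (n + 1)) ∘ₗ g := by
  obtain ⟨s⟩ := hX
  intro n P hP f
  obtain ⟨N, i, r, hir⟩ := hP
  -- the contraction
  set σ : ↥(X.X (n+1)) → ↥(X.X n) := fun x => s.hom (n+1) n x with hσ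
  have hσ_smul : ∀ (c : MonoidAlgebra k ↥H) (x : ↥(X.X (n+1))),
      σ (hres k G H c • x) = hres k G H c • σ x := by
    intro c x
    exact (s.hom (n+1) n).hom.map_smul c x
  have key : ∀ x : ↥(X.X (n+1)), X.d (n+1) (n+1+1) x = 0 →
      X.d n (n+1) (σ x) = x := by
    intro x hx
    have hc := s.comm (n+1)
    rw [dNext_eq _ (show (ComplexShape.up ℤ).Rel (n+1) (n+1+1) by simp),
        prevD_eq _ (show (ComplexShape.up ℤ).Rel n (n+1) by simp)] at hc
    have := congrArg (fun (φ : ((ResC k G H).obj X).X (n+1) ⟶ ((ResC k G H).obj X).X (n+1)) =>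
      ModuleCat.Hom.hom φ x) hc
    simp only [HomologicalComplex.id_f, ModuleCat.id_apply] at this
    have h2 : (((ResC k G H).obj X).d (n+1) (n+1+1) ≫ s.hom (n+1+1) (n+1) +
        s.hom (n+1) n ≫ ((ResC k G H).obj X).d n (n+1) +
        (0 : (ResC k G H).obj X ⟶ (ResC k G H).obj X).f (n+1)) x
        = s.hom (n+1+1) (n+1) (((ResC k G H).obj X).d (n+1) (n+1+1) x)
          + ((ResC k G H).obj X).d n (n+1) (σ x) := by
      simp only [hσ, HomologicalComplex.zero_f, LinearMap.add_apply, LinearMap.zero_apply,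
        add_zero, comp_apply]
      exact LinearMap.add_apply _ _ _
    have hd1 : ((ResC k G H).obj X).d (n+1) (n+1+1) x = (0 : ↥(X.X (n+1+1))) := hx
    rw [h2, hd1] at this
    have h0 := (s.hom (n+1+1) (n+1)).hom.map_zero
    erw [h0, zero_add] at this
    exact this.symm
  -- the relations submodule
  set q : Submodule (MonoidAlgebra k G) (↥N →₀ MonoidAlgebra k G) :=
    Submodule.span (MonoidAlgebra k G)
      ({x | ∃ n n' : ↥N, x = Finsupp.single (n + n') (1 : MonoidAlgebra k G)
              - Finsupp.single n 1 - Finsupp.single n' 1} ∪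
       {x | ∃ (r : MonoidAlgebra k ↥H) (n : ↥N),
              x = Finsupp.single (r • n) (1 : MonoidAlgebra k G)
                - Finsupp.single n (hres k G H r)}) with hq
  let e : ↥N → ↥(IndObj k G H N) := fun m => q.mkQ (Finsupp.single m 1)
  have e_add : ∀ m m' : ↥N, e (m + m') = e m + e m' := by
    intro m m'
    have hmem : (Finsupp.single (m + m') (1 : MonoidAlgebra k G)
        - Finsupp.single m 1 - Finsupp.single m' 1) ∈ q :=
      Submodule.subset_span (Or.inl ⟨m, m', rfl⟩)
    have h0 : q.mkQ (Finsupp.single (m + m') (1 : MonoidAlgebra k G))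
        - q.mkQ (Finsupp.single m 1) - q.mkQ (Finsupp.single m' 1) = 0 := by
      rw [← map_sub, ← map_sub, Submodule.mkQ_apply, Submodule.Quotient.mk_eq_zero]
      exact hmem
    rw [sub_sub, sub_eq_zero] at h0
    exact h0
  have e_smul : ∀ (c : MonoidAlgebra k ↥H) (m : ↥N),
      e (c • m) = hres k G H c • e m := by
    intro c m
    have hmem : (Finsupp.single (c • m) (1 : MonoidAlgebra k G)
        - Finsupp.single m (hres k G H c)) ∈ q :=
      Submodule.subset_span (Or.inr ⟨c, m, rfl⟩)
    have h0 : q.mkQ (Finsupp.single (c • m) (1 : MonoidAlgebra k G))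
        - q.mkQ (Finsupp.single m (hres k G H c)) = 0 := by
      rw [← map_sub, Submodule.mkQ_apply, Submodule.Quotient.mk_eq_zero]
      exact hmem
    have hs : (Finsupp.single m (hres k G H c))
        = hres k G H c • Finsupp.single m (1 : MonoidAlgebra k G) := by
      rw [Finsupp.smul_single, smul_eq_mul, mul_one]
    rw [hs, map_smul, sub_eq_zero] at h0
    exact h0
  -- the lift
  set L0 : (↥N →₀ MonoidAlgebra k G) →ₗ[MonoidAlgebra k G] ↥(X.X n) :=
    (Finsupp.lift ↥(X.X n) (MonoidAlgebra k G) ↥N)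
      (fun m => σ ((f (r (e m))) : ↥(X.X (n+1)))) with hL0def
  have hL0 : ∀ (a : ↥N) (b : MonoidAlgebra k G),
      L0 (Finsupp.single a b) = b • σ ((f (r (e a))) : ↥(X.X (n+1))) := by
    intro a b
    rw [hL0def]
    rw [Finsupp.lift_apply]
    exact Finsupp.sum_single_index (zero_smul _ _)
  have hadd : ∀ m m' : ↥N, σ ((f (r (e (m + m')))) : ↥(X.X (n+1)))
      = σ ((f (r (e m))) : ↥(X.X (n+1))) + σ ((f (r (e m'))) : ↥(X.X (n+1))) := by
    intro m m'
    simp only [hσ]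
    rw [e_add, map_add, map_add, Submodule.coe_add]
    exact (s.hom (n+1) n).hom.map_add _ _
  have hsmul : ∀ (c : MonoidAlgebra k ↥H) (m : ↥N),
      σ ((f (r (e (c • m)))) : ↥(X.X (n+1)))
        = hres k G H c • σ ((f (r (e m))) : ↥(X.X (n+1))) := by
    intro c m
    rw [e_smul, map_smul, map_smul, Submodule.coe_smul, hσ_smul]
  have hker : q ≤ LinearMap.ker L0 := by
    rw [hq, Submodule.span_le]
    rintro x (⟨m, m', rfl⟩ | ⟨c, m, rfl⟩)
    · simp only [SetLike.mem_coe, LinearMap.mem_ker, map_sub, hL0, one_smul]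
      rw [hadd m m']
      abel
    · simp only [SetLike.mem_coe, LinearMap.mem_ker, map_sub, hL0]
      rw [one_smul, hsmul c m, sub_self]
  let hhat : ↥(IndObj k G H N) →ₗ[MonoidAlgebra k G] ↥(X.X n) := q.liftQ L0 hker
  have hhhate : ∀ a : ↥N, hhat (e a) = σ ((f (r (e a))) : ↥(X.X (n+1))) := by
    intro a
    show q.liftQ L0 hker (q.mkQ (Finsupp.single a 1)) = _
    rw [Submodule.mkQ_apply, Submodule.liftQ_apply, hL0, one_smul]
  have main : ((X.d n (n+1)).hom : X.X n →ₗ[MonoidAlgebra k G] X.X (n+1)).comp hhat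
      = (Zn X (n+1)).subtype.comp (f.comp r.hom) := by
    apply Submodule.linearMap_qext
    apply Finsupp.lhom_ext
    intro a b
    have hb : Finsupp.single a b = b • Finsupp.single a (1 : MonoidAlgebra k G) := by
      rw [Finsupp.smul_single, smul_eq_mul, mul_one]
    rw [hb]
    simp only [LinearMap.comp_apply, map_smul]
    congr 1
    show X.d n (n+1) (hhat (e a)) = ((f (r (e a))) : ↥(X.X (n+1)))
    rw [hhhate a]
    exact key _ (LinearMap.mem_ker.mp (f (r (e a))).2)
  refine ⟨hhat.comp i.hom, ?_⟩
  apply LinearMap.ext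
  intro x
  have hx : r (i x) = x := congrArg (fun φ => ModuleCat.Hom.hom φ x) hir
  calc (Zn X (n+1)).subtype (f x)
      = (Zn X (n+1)).subtype (f (r (i x))) := by rw [hx]
    _ = X.d n (n+1) (hhat (i x)) := (LinearMap.congr_fun main (i x)).symm
end
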